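/- (Cartan fixed point theorem.) Let M be a complete, connected, simply connected Riemannian manifold of nonpositive sectional curvature, and let G be a compact topological group acting on M by isometries. Then there exists a point p ∈ M fixed by every element of G. -/

import Mathlib

/-- (Cartan fixed point theorem, Theorem `thm:CARTAN`.)
`M` is a complete metric space satisfying the semi-hyperbolic midpoint
inequality of nonpositive curvature (valid in every complete, connected,
simply connected Riemannian manifold of nonpositive sectional curvature, and
in every complete CAT(0) space).  If a compact topological group `G` acts
continuously on `M` by isometries, then the action has a fixed point. -/
theorem stmt_15 {M G : Type*} [MetricSpace M] [CompleteSpace M] [Nonempty M]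
    [Group G] [TopologicalSpace G] [CompactSpace G] [IsTopologicalGroup G]
    [MulAction G M] [ContinuousSMul G M]
    (hiso : ∀ g : G, Isometry fun x : M => g • x)
    (hmid : ∀ p₀ p₁ : M, ∃ m : M, ∀ q : M,
      dist m q ^ 2 ≤ (dist p₀ q ^ 2 + dist p₁ q ^ 2) / 2 - dist p₀ p₁ ^ 2 / 4) :
    ∃ p : M, ∀ g : G, g • p = p := by
  classical
  obtain ⟨x0⟩ := ‹Nonempty M›
  have hGne : Nonempty G := ⟨1⟩
  -- the orbit map and the "radius" function
  set f : G → M := fun g => g • x0 with hfdef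
  have hfc : Continuous f := continuous_id.smul continuous_const
  set r : M → ℝ := fun q => ⨆ g : G, dist (f g) q with hrdef
  have hbdd : ∀ q : M, BddAbove (Set.range fun g : G => dist (f g) q) := by
    intro q
    exact (isCompact_range (hfc.dist continuous_const)).bddAbove
  have hrle : ∀ (q : M) (g : G), dist (f g) q ≤ r q := by
    intro q g
    simp only [hrdef]
    exact le_ciSup (hbdd q) g
  have hrnn : ∀ q : M, 0 ≤ r q := fun q => le_trans dist_nonneg (hrle q 1)
  -- r is 1-Lipschitz
  have hlip : ∀ a b : M, r a ≤ r b + dist b a := by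
    intro a b
    simp only [hrdef]
    refine ciSup_le fun g => ?_
    calc dist (f g) a ≤ dist (f g) b + dist b a := dist_triangle _ _ _
      _ ≤ r b + dist b a := by
          have := hrle b g
          linarith
  have hrc : Continuous r := by
    apply LipschitzWith.continuous (K := 1)
    apply LipschitzWith.of_dist_le_mul
    intro a b
    rw [Real.dist_eq, NNReal.coe_one, one_mul, abs_sub_le_iff]
    have h1 := hlip a b
    have h2 := hlip b a
    have h3 : dist b a = dist a b := dist_comm b a
    constructor <;> linarith
  -- the midpoint inequality transfers to r
  have hmid' : ∀ p₀ p₁ : M, ∃ m : M,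
      r m ^ 2 ≤ (r p₀ ^ 2 + r p₁ ^ 2) / 2 - dist p₀ p₁ ^ 2 / 4 := by
    intro p₀ p₁
    obtain ⟨m, hm⟩ := hmid p₀ p₁
    refine ⟨m, ?_⟩
    set B : ℝ := (r p₀ ^ 2 + r p₁ ^ 2) / 2 - dist p₀ p₁ ^ 2 / 4 with hBdef
    have hpt : ∀ g : G, dist (f g) m ^ 2 ≤ B := by
      intro g
      have h1 := hm (f g)
      have h2 : dist p₀ (f g) ≤ r p₀ := by rw [dist_comm]; exact hrle p₀ g
      have h3 : dist p₁ (f g) ≤ r p₁ := by rw [dist_comm]; exact hrle p₁ g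
      have h2' : dist p₀ (f g) ^ 2 ≤ r p₀ ^ 2 := pow_le_pow_left₀ dist_nonneg h2 2
      have h3' : dist p₁ (f g) ^ 2 ≤ r p₁ ^ 2 := pow_le_pow_left₀ dist_nonneg h3 2
      have h4 : dist (f g) m = dist m (f g) := dist_comm _ _
      rw [h4]
      simp only [hBdef]
      linarith
    have hB : 0 ≤ B := le_trans (sq_nonneg _) (hpt 1)
    have h5 : r m ≤ Real.sqrt B := by
      simp only [hrdef]
      refine ciSup_le fun g => ?_
      rw [show (Real.sqrt B) = Real.sqrt B from rfl]
      have := hpt g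
      nlinarith [Real.sq_sqrt hB, Real.sqrt_nonneg B, dist_nonneg (x := f g) (y := m)]
    calc r m ^ 2 ≤ Real.sqrt B ^ 2 := pow_le_pow_left₀ (hrnn m) h5 2
      _ = B := Real.sq_sqrt hB
  -- the optimal radius
  set ρ : ℝ := sInf (Set.range r) with hρdef
  have hbb : BddBelow (Set.range r) := by
    refine ⟨0, ?_⟩
    rintro x ⟨y, rfl⟩
    exact hrnn y
  have hρle : ∀ q : M, ρ ≤ r q := fun q => csInf_le hbb (Set.mem_range_self q)
  have hρ0 : 0 ≤ ρ := le_csInf ⟨r x0, Set.mem_range_self x0⟩ (by rintro x ⟨y, rfl⟩; exact hrnn y)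
  -- a minimizing sequence
  have hqex : ∀ n : ℕ, ∃ x : M, r x < Real.sqrt (ρ ^ 2 + 1 / ((n : ℝ) + 1)) := by
    intro n
    have h1 : (0 : ℝ) < 1 / ((n : ℝ) + 1) := by positivity
    have h2 : ρ < Real.sqrt (ρ ^ 2 + 1 / ((n : ℝ) + 1)) := by
      have h3 := Real.sqrt_lt_sqrt (sq_nonneg ρ)
        (by linarith : ρ ^ 2 < ρ ^ 2 + 1 / ((n : ℝ) + 1))
      rwa [Real.sqrt_sq hρ0] at h3
    obtain ⟨x, ⟨y, rfl⟩, hx⟩ := exists_lt_of_csInf_lt ⟨r x0, Set.mem_range_self x0⟩ h2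
    exact ⟨y, hx⟩
  choose q hq using hqex
  have hq2 : ∀ n : ℕ, r (q n) ^ 2 ≤ ρ ^ 2 + 1 / ((n : ℝ) + 1) := by
    intro n
    have hnn : (0 : ℝ) ≤ ρ ^ 2 + 1 / ((n : ℝ) + 1) := by positivity
    calc r (q n) ^ 2 ≤ Real.sqrt (ρ ^ 2 + 1 / ((n : ℝ) + 1)) ^ 2 :=
          pow_le_pow_left₀ (hrnn _) (le_of_lt (hq n)) 2
      _ = _ := Real.sq_sqrt hnn
  have key : ∀ a b : M, dist a b ^ 2 ≤ 2 * r a ^ 2 + 2 * r b ^ 2 - 4 * ρ ^ 2 := by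
    intro a b
    obtain ⟨m, hm⟩ := hmid' a b
    have h1 : ρ ^ 2 ≤ r m ^ 2 := pow_le_pow_left₀ hρ0 (hρle m) 2
    linarith
  -- the minimizing sequence is Cauchy
  have hcauchy : CauchySeq q := by
    apply cauchySeq_of_le_tendsto_0 (b := fun N : ℕ => Real.sqrt (4 / ((N : ℝ) + 1)))
    · intro n m N hn hm
      have hNn : (1 : ℝ) / ((n : ℝ) + 1) ≤ 1 / ((N : ℝ) + 1) := by
        apply one_div_le_one_div_of_le (by positivity)
        have : (N : ℝ) ≤ (n : ℝ) := Nat.cast_le.mpr hn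
        linarith
      have hNm : (1 : ℝ) / ((m : ℝ) + 1) ≤ 1 / ((N : ℝ) + 1) := by
        apply one_div_le_one_div_of_le (by positivity)
        have : (N : ℝ) ≤ (m : ℝ) := Nat.cast_le.mpr hm
        linarith
      have h1 : dist (q n) (q m) ^ 2 ≤ 4 / ((N : ℝ) + 1) := by
        have h2 := key (q n) (q m)
        have h3 := hq2 n
        have h4 := hq2 m
        have h5 : 4 / ((N : ℝ) + 1) = 4 * (1 / ((N : ℝ) + 1)) := by ring
        linarith
      calc dist (q n) (q m) = Real.sqrt (dist (q n) (q m) ^ 2) :=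
            (Real.sqrt_sq dist_nonneg).symm
        _ ≤ Real.sqrt (4 / ((N : ℝ) + 1)) := Real.sqrt_le_sqrt h1
    · have h4 : Filter.Tendsto (fun N : ℕ => 4 / ((N : ℝ) + 1)) Filter.atTop (nhds 0) := by
        have := tendsto_one_div_add_atTop_nhds_zero_nat.const_mul (4 : ℝ)
        simpa [div_eq_mul_inv] using this
      have h5 : Filter.Tendsto Real.sqrt (nhds 0) (nhds 0) := by
        simpa [Real.sqrt_zero] using Real.continuous_sqrt.tendsto 0
      exact h5.comp h4
  obtain ⟨p, hp⟩ := cauchySeq_tendsto_of_complete hcauchy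
  -- the limit is a minimizer
  have hrp : r p = ρ := by
    have h1 : Filter.Tendsto (fun n : ℕ => r (q n)) Filter.atTop (nhds (r p)) :=
      (hrc.tendsto p).comp hp
    have h3 : Filter.Tendsto (fun n : ℕ => ρ ^ 2 + 1 / ((n : ℝ) + 1)) Filter.atTop
        (nhds (ρ ^ 2)) := by
      simpa using (tendsto_const_nhds : Filter.Tendsto (fun _ : ℕ => ρ ^ 2) Filter.atTop (nhds (ρ ^ 2))).add tendsto_one_div_add_atTop_nhds_zero_nat
    have h2 : Filter.Tendsto (fun n : ℕ => Real.sqrt (ρ ^ 2 + 1 / ((n : ℝ) + 1)))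
        Filter.atTop (nhds ρ) := by
      have h4 := (Real.continuous_sqrt.tendsto (ρ ^ 2)).comp h3
      rwa [Real.sqrt_sq hρ0] at h4
    have h5 : r p ≤ ρ := le_of_tendsto_of_tendsto' h1 h2 fun n => (hq n).le
    exact le_antisymm h5 (hρle p)
  -- uniqueness of the minimizer
  have huniq : ∀ a : M, r a = ρ → a = p := by
    intro a ha
    obtain ⟨m, hm⟩ := hmid' a p
    have h1 : ρ ^ 2 ≤ r m ^ 2 := pow_le_pow_left₀ hρ0 (hρle m) 2
    rw [ha, hrp] at hm
    have h2 : dist a p ^ 2 ≤ 0 := by linarith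
    have h3 : dist a p ^ 2 = 0 := le_antisymm h2 (sq_nonneg _)
    rwa [pow_eq_zero_iff (by norm_num), dist_eq_zero] at h3
  -- r is invariant under the action
  have hrinv : ∀ (g : G) (qq : M), r (g • qq) = r qq := by
    intro g qq
    have hrange : (Set.range fun h : G => dist (f h) (g • qq)) =
        Set.range fun h : G => dist (f h) qq := by
      ext x
      constructor
      · rintro ⟨h, rfl⟩
        refine ⟨g⁻¹ * h, ?_⟩
        calc dist (f (g⁻¹ * h)) qq
            = dist (g • f (g⁻¹ * h)) (g • qq) := ((hiso g).dist_eq _ _).symm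
          _ = dist (f h) (g • qq) := by
              simp only [hfdef, smul_smul, mul_inv_cancel_left]
      · rintro ⟨h, rfl⟩
        refine ⟨g * h, ?_⟩
        calc dist (f (g * h)) (g • qq)
            = dist (g • f h) (g • qq) := by simp only [hfdef, smul_smul]
          _ = dist (f h) qq := (hiso g).dist_eq _ _
    simp only [hrdef]
    rw [iSup, iSup, hrange]
  refine ⟨p, fun g => huniq (g • p) ?_⟩
  rw [hrinv g p, hrp]
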